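/- Let κ be an uncountable cardinal, D a nonprincipal κ-complete ultrafilter on κ, and P a partial order such that for every α < κ there is a maximal antichain of P of cardinality at least the cardinality of α. Then there is a family (f_γ)_{γ<κ} of functions from κ to P such that for all γ < δ < κ, {α < κ : f_γ(α) and f_δ(α) are compatible in P} ∉ D; hence the classes [f_γ], γ < κ, form an antichain of cardinality κ in the ultrapower P^κ/D, which is therefore not κ-cc. -/

import Mathlib

open Filter

/-- Two elements of a preorder are compatible if they have a common lower bound. -/
def Compat {Q : Type*} [Preorder Q] (p q : Q) : Prop := ∃ r, r ≤ p ∧ r ≤ q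

/-- A maximal antichain: a set of pairwise incompatible elements such that every element
is compatible with some member. -/
def IsMaxIncompatAntichain {Q : Type*} [Preorder Q] (A : Set Q) : Prop :=
  (∀ p ∈ A, ∀ q ∈ A, p ≠ q → ¬ Compat p q) ∧ ∀ p : Q, ∃ q ∈ A, Compat p q

/-- If `D` is a nonprincipal `κ`-complete ultrafilter on the uncountable
cardinal `κ` and `P` has maximal antichains of all sizes below `κ` (i.e. of size at least the
cardinality of each `α < κ`), then there is a family `(f_γ)_{γ<κ}` whose classes form an
antichain of size `κ` in `P^κ/D`; hence `P^κ/D` is not `κ`-cc. -/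
theorem stmt_4 {κ P : Type u} [LinearOrder κ] [PartialOrder P]
    (hκ : Cardinal.aleph0 < Cardinal.mk κ)
    (D : Ultrafilter κ)
    (hcomplete : ∀ S : Set (Set κ), Cardinal.mk S < Cardinal.mk κ →
      (∀ s ∈ S, s ∈ D) → ⋂₀ S ∈ D)
    (hnp : ∀ x : κ, {x} ∉ D)
    (hP : ∀ c : Cardinal, c < Cardinal.mk κ →
      ∃ A : Set P, IsMaxIncompatAntichain A ∧ c ≤ Cardinal.mk A) :
    ∃ f : κ → κ → P,
      (∀ γ δ : κ, γ < δ → {α : κ | Compat (f γ α) (f δ α)} ∉ D) ∧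
      (∀ p ∈ Set.range (fun γ : κ => ((f γ : κ → P) : Germ (D : Filter κ) P)),
        ∀ q ∈ Set.range (fun γ : κ => ((f γ : κ → P) : Germ (D : Filter κ) P)),
          p ≠ q → ¬ Compat p q) ∧
      Cardinal.mk (Set.range (fun γ : κ => ((f γ : κ → P) : Germ (D : Filter κ) P)))
        = Cardinal.mk κ ∧
      ¬ (∀ A : Set (Germ (D : Filter κ) P),
          (∀ p ∈ A, ∀ q ∈ A, p ≠ q → ¬ Compat p q) → Cardinal.mk A < Cardinal.mk κ) := by
  classical
  -- sets of cardinality `< #κ` are not in `D`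
  have hsmall : ∀ s : Set κ, Cardinal.mk s < Cardinal.mk κ → s ∉ D := by
    intro s hs hsD
    have hS : ∀ t ∈ (fun x : κ => ({x}ᶜ : Set κ)) '' s, t ∈ D := by
      rintro t ⟨x, _, rfl⟩
      exact Ultrafilter.compl_mem_iff_notMem.2 (hnp x)
    have hcard : Cardinal.mk ((fun x : κ => ({x}ᶜ : Set κ)) '' s) < Cardinal.mk κ :=
      lt_of_le_of_lt Cardinal.mk_image_le hs
    have hmem := hcomplete _ hcard hS
    have hsub : ⋂₀ ((fun x : κ => ({x}ᶜ : Set κ)) '' s) ⊆ sᶜ := by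
      intro y hy hys
      exact (hy _ ⟨y, hys, rfl⟩) rfl
    have : sᶜ ∈ D := D.toFilter.mem_of_superset hmem hsub
    exact (Ultrafilter.compl_mem_iff_notMem.1 this) hsD
  have h1κ : (1 : Cardinal) < Cardinal.mk κ := Cardinal.one_lt_aleph0.trans hκ
  -- P is nonempty
  have hPne : Nonempty P := by
    obtain ⟨A1, _, hA1c⟩ := hP 1 h1κ
    obtain ⟨a⟩ := Cardinal.mk_ne_zero_iff.1 (by positivity : Cardinal.mk A1 ≠ 0)
    exact ⟨a.1⟩
  -- a well-ordered index type of the same cardinality with small initial segments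
  set ι := (Cardinal.mk κ).ord.ToType with hιdef
  have hι : Cardinal.mk ι = Cardinal.mk κ := by
    rw [hιdef, Cardinal.mk_toType, Cardinal.card_ord]
  obtain ⟨e⟩ := Cardinal.eq.1 hι
  have hIic : ∀ β : ι, Cardinal.mk (Set.Iic β) < Cardinal.mk κ := by
    intro β
    have h1 : Cardinal.mk (Set.Iio β) < Cardinal.mk κ := Cardinal.mk_Iio_ord_toType β
    have heq : Set.Iic β = insert β (Set.Iio β) := by
      ext x; simp [le_iff_lt_or_eq, or_comm]
    rw [heq]
    calc Cardinal.mk (insert β (Set.Iio β) : Set ι) ≤ Cardinal.mk (Set.Iio β) + 1 :=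
          Cardinal.mk_insert_le
      _ < Cardinal.mk κ := Cardinal.add_lt_of_lt hκ.le h1 h1κ
  choose A hA hAc using fun β : ι => hP (Cardinal.mk (Set.Iic β)) (hIic β)
  have hinj : ∀ β : ι, ∃ g : Set.Iic β → A β, Function.Injective g := by
    intro β
    obtain ⟨g⟩ := (Cardinal.le_def _ _).1 (hAc β)
    exact ⟨g, g.injective⟩
  choose g hg using hinj
  let F : ι → ι → P := fun γ β =>
    if h : γ ≤ β then (g β ⟨γ, h⟩ : P) else Classical.arbitrary P
  -- the key smallness property
  have key : ∀ γ δ : ι, γ ≠ δ →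
      Cardinal.mk {β : ι | Compat (F γ β) (F δ β)} < Cardinal.mk κ := by
    intro γ δ hne
    have hsub : {β : ι | Compat (F γ β) (F δ β)} ⊆ Set.Iio γ ∪ Set.Iio δ := by
      intro β hβ
      by_contra hβ'
      simp only [Set.mem_union, Set.mem_Iio, not_or, not_lt] at hβ'
      obtain ⟨hγβ, hδβ⟩ := hβ'
      have hFγ : F γ β = (g β ⟨γ, hγβ⟩ : P) := dif_pos hγβ
      have hFδ : F δ β = (g β ⟨δ, hδβ⟩ : P) := dif_pos hδβ
      have hne' : F γ β ≠ F δ β := by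
        rw [hFγ, hFδ]
        intro hcoe
        exact hne (congrArg Subtype.val (hg β (Subtype.coe_injective hcoe)))
      exact (hA β).1 _ (by rw [hFγ]; exact (g β ⟨γ, hγβ⟩).2) _
        (by rw [hFδ]; exact (g β ⟨δ, hδβ⟩).2) hne' hβ
    calc Cardinal.mk {β : ι | Compat (F γ β) (F δ β)}
        ≤ Cardinal.mk (Set.Iio γ ∪ Set.Iio δ : Set ι) := Cardinal.mk_le_mk_of_subset hsub
      _ ≤ Cardinal.mk (Set.Iio γ) + Cardinal.mk (Set.Iio δ) := Cardinal.mk_union_le _ _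
      _ < Cardinal.mk κ := Cardinal.add_lt_of_lt hκ.le
          (Cardinal.mk_Iio_ord_toType γ) (Cardinal.mk_Iio_ord_toType δ)
  -- the family
  set f : κ → κ → P := fun γ α => F (e.symm γ) (e.symm α) with hfdef
  have main : ∀ γ δ : κ, γ ≠ δ → {α : κ | Compat (f γ α) (f δ α)} ∉ D := by
    intro γ δ hne
    have hne' : e.symm γ ≠ e.symm δ := fun h => hne (e.symm.injective h)
    have hpre : {α : κ | Compat (f γ α) (f δ α)}
        = e.symm ⁻¹' {β : ι | Compat (F (e.symm γ) β) (F (e.symm δ) β)} := rfl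
    refine hsmall _ ?_
    rw [hpre]
    exact lt_of_le_of_lt
      (Cardinal.mk_preimage_of_injective _ _ e.symm.injective)
      (key _ _ hne')
  have hanti : ∀ p ∈ Set.range (fun γ : κ => ((f γ : κ → P) : Germ (D : Filter κ) P)),
      ∀ q ∈ Set.range (fun γ : κ => ((f γ : κ → P) : Germ (D : Filter κ) P)),
        p ≠ q → ¬ Compat p q := by
    rintro p ⟨γ, rfl⟩ q ⟨δ, rfl⟩ hpq ⟨r, hr1, hr2⟩
    have hγδ : γ ≠ δ := by rintro rfl; exact hpq rfl
    revert hr1 hr2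
    induction r using Filter.Germ.inductionOn with
    | _ h =>
      intro hr1 hr2
      rw [Filter.Germ.coe_le] at hr1 hr2
      have hev : ∀ᶠ α in (D : Filter κ), Compat (f γ α) (f δ α) :=
        (hr1.and hr2).mono fun α hα => ⟨h α, hα.1, hα.2⟩
      exact main γ δ hγδ hev
  have hinjf : Function.Injective (fun γ : κ => ((f γ : κ → P) : Germ (D : Filter κ) P)) := by
    intro γ δ hEq
    by_contra hne
    have heq' : f γ =ᶠ[(D : Filter κ)] f δ := Filter.Germ.coe_eq.1 hEq
    have hev : ∀ᶠ α in (D : Filter κ), Compat (f γ α) (f δ α) :=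
      heq'.mono fun α hα => ⟨f γ α, le_refl _, hα ▸ le_refl _⟩
    exact main γ δ hne hev
  have hcard : Cardinal.mk (Set.range (fun γ : κ => ((f γ : κ → P) : Germ (D : Filter κ) P)))
      = Cardinal.mk κ := Cardinal.mk_range_eq _ hinjf
  refine ⟨f, fun γ δ hlt => main γ δ hlt.ne, hanti, hcard, ?_⟩
  intro H
  have := H _ hanti
  rw [hcard] at this
  exact lt_irrefl _ this
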